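/- Let H be a finite-dimensional real Hilbert space and let A_1, …, A_k be nonempty, convex, closed subsets of H. If the composition P_{A_k} ∘ P_{A_{k−1}} ∘ ⋯ ∘ P_{A_1} has a fixed point, then for every x ∈ H the sequence of iterates ((P_{A_k} ∘ P_{A_{k−1}} ∘ ⋯ ∘ P_{A_1})^n x)_{n ∈ ℕ} converges. -/

import Mathlib

open Filter Topology

/-- `P` is the metric projection onto `A`: for every `x`, `P x` belongs to `A` and
is a point of `A` nearest to `x`. -/
def IsMetricProj {H : Type*} [NormedAddCommGroup H] (A : Set H) (P : H → H) : Prop :=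
  ∀ x, P x ∈ A ∧ ∀ y ∈ A, dist x (P x) ≤ dist x y

/-- The `α`-relaxed version of a map `P`: `x ↦ α • P x + (1 - α) • x`. -/
def relax {H : Type*} [AddCommGroup H] [Module ℝ H] (α : ℝ) (P : H → H) : H → H :=
  fun x => α • P x + (1 - α) • x

/-- The composition `T (k-1) ∘ ⋯ ∘ T 1 ∘ T 0` (so `T 0` is applied first). -/
def compFold {H : Type*} {k : ℕ} (T : Fin k → H → H) : H → H :=
  (List.ofFn T).foldl (fun g f => f ∘ g) id

section Aux

variable {H : Type*} [NormedAddCommGroup H] [InnerProductSpace ℝ H]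

/-- An "averaged-type" inequality. -/
def AvgIneq (c : ℝ) (T : H → H) : Prop :=
  ∀ x y : H, ‖T x - T y‖ ^ 2 + c * ‖(x - T x) - (y - T y)‖ ^ 2 ≤ ‖x - y‖ ^ 2

lemma avg_id (c : ℝ) : AvgIneq c (id : H → H) := by
  intro x y
  simp

lemma metricProj_inner_le {A : Set H} {P : H → H} (hne : A.Nonempty) (hconv : Convex ℝ A)
    (hP : IsMetricProj A P) (x : H) : ∀ w ∈ A, inner ℝ (x - P x) (w - P x) ≤ (0:ℝ) := by
  have hmem := (hP x).1
  rw [← norm_eq_iInf_iff_real_inner_le_zero hconv hmem]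
  apply le_antisymm
  · haveI : Nonempty A := hne.to_subtype
    apply le_ciInf
    intro w
    have := (hP x).2 w w.2
    simpa [dist_eq_norm] using this
  · haveI : Nonempty A := hne.to_subtype
    exact ciInf_le ⟨0, by rintro r ⟨w, rfl⟩; positivity⟩ (⟨P x, hmem⟩ : A)

lemma metricProj_avg {A : Set H} {P : H → H} (hne : A.Nonempty) (hconv : Convex ℝ A)
    (hP : IsMetricProj A P) : AvgIneq 1 P := by
  intro x y
  have h1 := metricProj_inner_le hne hconv hP x (P y) (hP y).1
  have h2 := metricProj_inner_le hne hconv hP y (P x) (hP x).1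
  -- firm nonexpansiveness: ‖Px - Py‖^2 ≤ ⟪x - y, Px - Py⟫
  have key : ‖P x - P y‖ ^ 2 ≤ inner ℝ (x - y) (P x - P y) := by
    have e1 : inner ℝ (x - P x) (P y - P x) = -(inner ℝ (x - P x) (P x - P y) : ℝ) := by
      rw [← inner_neg_right]
      congr 1
      abel
    have e2 : (inner ℝ ((x - P x) - (y - P y)) (P x - P y) : ℝ)
        = inner ℝ (x - P x) (P x - P y) - inner ℝ (y - P y) (P x - P y) := by
      rw [inner_sub_left]
    have e3 : (inner ℝ ((x - y) - (P x - P y)) (P x - P y) : ℝ)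
        = inner ℝ (x - y) (P x - P y) - ‖P x - P y‖ ^ 2 := by
      rw [inner_sub_left, real_inner_self_eq_norm_sq]
    have e4 : ((x - P x) - (y - P y)) = ((x - y) - (P x - P y)) := by abel
    rw [e1] at h1
    nlinarith [e2, e3, e4 ▸ e2]
  have expand : ‖(x - P x) - (y - P y)‖ ^ 2
      = ‖x - y‖ ^ 2 - 2 * inner ℝ (x - y) (P x - P y) + ‖P x - P y‖ ^ 2 := by
    have e4 : ((x - P x) - (y - P y)) = ((x - y) - (P x - P y)) := by abel
    rw [e4, norm_sub_sq_real]
  nlinarith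

lemma avg_comp {c1 c2 : ℝ} (hc1 : 0 < c1) (hc2 : 0 < c2) {T1 T2 : H → H}
    (h1 : AvgIneq c1 T1) (h2 : AvgIneq c2 T2) :
    AvgIneq (min c1 c2 / 2) (T2 ∘ T1) := by
  intro x y
  have H1 := h1 x y
  have H2 := h2 (T1 x) (T1 y)
  simp only [Function.comp_apply]
  set a := (x - T1 x) - (y - T1 y) with ha
  set b := (T1 x - T2 (T1 x)) - (T1 y - T2 (T1 y)) with hb
  have hab : (x - T2 (T1 x)) - (y - T2 (T1 y)) = a + b := by rw [ha, hb]; abel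
  rw [hab]
  have hsum : ‖a + b‖ ^ 2 ≤ 2 * ‖a‖ ^ 2 + 2 * ‖b‖ ^ 2 := by
    have := norm_add_sq_real a b
    have := real_inner_le_norm a b
    nlinarith [sq_nonneg (‖a‖ - ‖b‖)]
  have hm1 : min c1 c2 ≤ c1 := min_le_left _ _
  have hm2 : min c1 c2 ≤ c2 := min_le_right _ _
  have hm0 : 0 < min c1 c2 := lt_min hc1 hc2
  nlinarith [sq_nonneg ‖a‖, sq_nonneg ‖b‖, sq_nonneg ‖a + b‖]

lemma avg_foldl (l : List (H → H)) (hl : ∀ f ∈ l, ∃ c > 0, AvgIneq c f) :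
    ∀ g : H → H, (∃ c > 0, AvgIneq c g) →
      ∃ c > 0, AvgIneq c (l.foldl (fun g f => f ∘ g) g) := by
  induction l with
  | nil => intro g hg; simpa using hg
  | cons f t ih =>
    intro g hg
    obtain ⟨c1, hc1, h1⟩ := hg
    obtain ⟨c2, hc2, h2⟩ := hl f (List.mem_cons_self)
    have : ∃ c > 0, AvgIneq c (f ∘ g) := ⟨min c1 c2 / 2, by positivity, avg_comp hc1 hc2 h1 h2⟩
    simpa using ih (fun f' hf' => hl f' (List.mem_cons_of_mem _ hf')) _ this

lemma avg_nonexpansive {c : ℝ} (hc : 0 < c) {T : H → H} (hT : AvgIneq c T) (x y : H) :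
    ‖T x - T y‖ ≤ ‖x - y‖ := by
  have := hT x y
  nlinarith [norm_nonneg (T x - T y), norm_nonneg (x - y), norm_nonneg ((x - T x) - (y - T y)),
    sq_nonneg ‖(x - T x) - (y - T y)‖]

lemma avg_converges [FiniteDimensional ℝ H] {c : ℝ} (hc : 0 < c) {T : H → H}
    (hT : AvgIneq c T) {p : H} (hp : T p = p) (x : H) :
    ∃ L : H, Tendsto (fun n => T^[n] x) atTop (𝓝 L) := by
  set u : ℕ → H := fun n => T^[n] x with hu
  have hstep : ∀ n, u (n + 1) = T (u n) := fun n => Function.iterate_succ_apply' T n x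
  -- Fejér monotonicity with respect to any fixed point
  have fejer : ∀ q : H, T q = q → ∀ n, ‖u (n+1) - q‖ ≤ ‖u n - q‖ := by
    intro q hq n
    have := avg_nonexpansive hc hT (u n) q
    rwa [hq, ← hstep n] at this
  have fejerAnti : ∀ q : H, T q = q → Antitone (fun n => ‖u n - q‖) := by
    intro q hq
    exact antitone_nat_of_succ_le (fejer q hq)
  -- boundedness
  have hbdd : ∀ n, u n ∈ Metric.closedBall p ‖x - p‖ := by
    intro n
    have : ‖u n - p‖ ≤ ‖u 0 - p‖ := (fejerAnti p hp) (Nat.zero_le n)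
    simpa [Metric.mem_closedBall, dist_eq_norm, hu] using this
  -- asymptotic regularity : u (n+1) - u n → 0
  have hdecr : ∀ n, c * ‖u n - u (n+1)‖ ^ 2 ≤ ‖u n - p‖ ^ 2 - ‖u (n+1) - p‖ ^ 2 := by
    intro n
    have := hT (u n) p
    rw [hp, ← hstep n] at this
    have e : (u n - u (n+1)) - (p - p) = u n - u (n+1) := by abel
    nlinarith [e ▸ this]
  have hanti2 : Antitone (fun n => ‖u n - p‖ ^ 2) := by
    intro m n hmn
    exact pow_le_pow_left₀ (norm_nonneg _) ((fejerAnti p hp) hmn) 2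
  have hbelow : BddBelow (Set.range fun n => ‖u n - p‖ ^ 2) :=
    ⟨0, by rintro r ⟨n, rfl⟩; positivity⟩
  have hconv2 : Tendsto (fun n => ‖u n - p‖ ^ 2) atTop (𝓝 (⨅ n, ‖u n - p‖ ^ 2)) :=
    tendsto_atTop_ciInf hanti2 hbelow
  have hdiff0 : Tendsto (fun n => ‖u n - p‖ ^ 2 - ‖u (n+1) - p‖ ^ 2) atTop (𝓝 0) := by
    have h2 : Tendsto (fun n => ‖u (n+1) - p‖ ^ 2) atTop (𝓝 (⨅ n, ‖u n - p‖ ^ 2)) :=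
      hconv2.comp (tendsto_add_atTop_nat 1)
    simpa using hconv2.sub h2
  have hsq0 : Tendsto (fun n => ‖u n - u (n+1)‖ ^ 2) atTop (𝓝 0) := by
    have hle : ∀ n, ‖u n - u (n+1)‖ ^ 2 ≤ (1/c) * (‖u n - p‖ ^ 2 - ‖u (n+1) - p‖ ^ 2) := by
      intro n
      have := hdecr n
      rw [div_mul_eq_mul_div, le_div_iff₀ hc]
      linarith
    have h0 : Tendsto (fun n => (1/c) * (‖u n - p‖ ^ 2 - ‖u (n+1) - p‖ ^ 2)) atTop (𝓝 0) := by
      simpa using hdiff0.const_mul (1/c)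
    exact squeeze_zero (fun n => by positivity) hle h0
  have hreg : Tendsto (fun n => u (n+1) - u n) atTop (𝓝 0) := by
    rw [tendsto_iff_norm_sub_tendsto_zero]
    have : Tendsto (fun n => Real.sqrt (‖u n - u (n+1)‖ ^ 2)) atTop (𝓝 (Real.sqrt 0)) :=
      hsq0.sqrt
    simp only [Real.sqrt_zero, Real.sqrt_sq (norm_nonneg _)] at this
    convert this using 2 with n
    rw [sub_zero, ← norm_neg]
    congr 1
    abel
  -- convergent subsequence via compactness
  obtain ⟨L, _, φ, hφ, hφconv⟩ :=
    (isCompact_closedBall p ‖x - p‖).tendsto_subseq hbdd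
  -- L is a fixed point of T
  have hcont : Continuous T := by
    apply (LipschitzWith.of_dist_le_mul (K := 1) fun a b => ?_).continuous
    simpa [dist_eq_norm, one_mul] using avg_nonexpansive hc hT a b
  have hTL : T L = L := by
    have h1 : Tendsto (fun n => T (u (φ n))) atTop (𝓝 (T L)) :=
      (hcont.tendsto L).comp hφconv
    have h2 : Tendsto (fun n => T (u (φ n))) atTop (𝓝 L) := by
      have h3 : Tendsto (fun n => u (φ n + 1) - u (φ n)) atTop (𝓝 0) :=
        hreg.comp hφ.tendsto_atTop
      have h4 : Tendsto (fun n => u (φ n) + (u (φ n + 1) - u (φ n))) atTop (𝓝 (L + 0)) :=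
        hφconv.add h3
      simp only [add_sub_cancel, add_zero] at h4
      have : ∀ n, u (φ n + 1) = T (u (φ n)) := fun n => hstep (φ n)
      simpa [this] using h4
    exact tendsto_nhds_unique h1 h2
  -- the whole sequence converges to L
  refine ⟨L, ?_⟩
  rw [tendsto_iff_norm_sub_tendsto_zero]
  have hanti : Antitone (fun n => ‖u n - L‖) := fejerAnti L hTL
  have hb : BddBelow (Set.range fun n => ‖u n - L‖) :=
    ⟨0, by rintro r ⟨n, rfl⟩; positivity⟩
  have hlim : Tendsto (fun n => ‖u n - L‖) atTop (𝓝 (⨅ n, ‖u n - L‖)) :=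
    tendsto_atTop_ciInf hanti hb
  have hsub : Tendsto (fun n => ‖u (φ n) - L‖) atTop (𝓝 0) := by
    have := (tendsto_iff_norm_sub_tendsto_zero).1 hφconv
    simpa using this
  have hsub' : Tendsto (fun n => ‖u (φ n) - L‖) atTop (𝓝 (⨅ n, ‖u n - L‖)) :=
    hlim.comp hφ.tendsto_atTop
  have : (⨅ n, ‖u n - L‖) = 0 := tendsto_nhds_unique hsub' hsub
  rwa [this] at hlim

end Aux

theorem stmt_19 {H : Type*} [NormedAddCommGroup H] [InnerProductSpace ℝ H]
    [FiniteDimensional ℝ H]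
    (k : ℕ) (hk : 1 ≤ k) (A : Fin k → Set H)
    (hA : ∀ i, (A i).Nonempty ∧ Convex ℝ (A i) ∧ IsClosed (A i))
    (P : Fin k → H → H) (hP : ∀ i, IsMetricProj (A i) (P i))
    (hfix : ∃ x, compFold P x = x) :
    ∀ x : H, ∃ L : H,
      Filter.Tendsto (fun n => (compFold P)^[n] x) Filter.atTop (nhds L) := by
  intro x
  obtain ⟨p, hp⟩ := hfix
  have havg : ∃ c > 0, AvgIneq c (compFold P) := by
    apply avg_foldl
    · intro f hf
      rw [List.mem_ofFn] at hf
      obtain ⟨i, rfl⟩ := hf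
      exact ⟨1, one_pos, metricProj_avg (hA i).1 (hA i).2.1 (hP i)⟩
    · exact ⟨1, one_pos, avg_id 1⟩
  obtain ⟨c, hc, hT⟩ := havg
  exact avg_converges hc hT hp x
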